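/- Let a_{-r}, …, a_0 ∈ ℂ with a_{-r} ≠ 0 and |a_0| < 1, let N > r ≥ 1 and let B ∈ M_{r,N}(ℂ) with B[1:r,1:r] invertible. For each z with |z| ≥ 1, there exists a matrix C(z) ∈ M_r(ℂ), with entries polynomial in z, such that B U = (0 | C(z)) U for every vector U ∈ ℂ^N satisfying the recurrence a_{-r} U_j + a_{-r+1} U_{j+1} + ⋯ + (a_0 − z) U_{j+r} = 0 for 1 ≤ j ≤ N − r, and moreover deg_z det C(z) = N − r. -/

import Mathlib

open Matrix Polynomial Finset


noncomputable def pA (N r : ℕ) (a : ℤ → ℂ) : ℕ → Fin r → Polynomial ℂ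
  | j =>
    if h : N - r ≤ j ∨ r = 0 then fun k => if (k : ℕ) = j - (N - r) then 1 else 0
    else
      Polynomial.C (a (-(r:ℤ)))⁻¹ •
        ((Polynomial.X - Polynomial.C (a 0)) • pA N r a (j + r)
          - ∑ k ∈ (Finset.Ico 1 r).attach, Polynomial.C (a ((k:ℤ) - r)) • pA N r a (j + k))
  termination_by j => N - j
  decreasing_by
  · omega
  · have := Finset.mem_Ico.mp k.2; omega

lemma pA_base {N r : ℕ} {a : ℤ → ℂ} {j : ℕ} (h : N - r ≤ j) :
    pA N r a j = fun (k : Fin r) => if (k : ℕ) = j - (N - r) then 1 else 0 := by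
  rw [pA]; simp [h]

lemma pA_step {N r : ℕ} {a : ℤ → ℂ} {j : ℕ} (h : ¬ (N - r ≤ j)) (hr : 1 ≤ r) :
    pA N r a j = Polynomial.C (a (-(r:ℤ)))⁻¹ •
        ((Polynomial.X - Polynomial.C (a 0)) • pA N r a (j + r)
          - ∑ k ∈ (Finset.Ico 1 r).attach, Polynomial.C (a ((k:ℤ) - r)) • pA N r a (j + k)) := by
  rw [pA]; rw [dif_neg (by omega)]

/-- split a `Fin r` sum into the `0` term and the `Ico 1 r` part -/
lemma fin_sum_split {M : Type*} [AddCommMonoid M] {r : ℕ} (hr : 1 ≤ r) (f : ℕ → M) :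
    ∑ k : Fin r, f k = f 0 + ∑ k ∈ Finset.Ico 1 r, f k := by
  rw [Fin.sum_univ_eq_sum_range, Finset.sum_range_eq_add_Ico _ hr]

lemma pA_rec {N r : ℕ} {a : ℤ → ℂ} (hr : 1 ≤ r) (ha : a (-(r:ℤ)) ≠ 0) {j : ℕ}
    (hj : j < N - r) :
    (∑ k : Fin r, Polynomial.C (a ((k : ℤ) - r)) • pA N r a (j + k))
      + (Polynomial.C (a 0) - Polynomial.X) • pA N r a (j + r) = 0 := by
  have key : Polynomial.C (a (-(r:ℤ))) • pA N r a j
      = (Polynomial.X - Polynomial.C (a 0)) • pA N r a (j + r)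
        - ∑ k ∈ (Finset.Ico 1 r).attach, Polynomial.C (a ((k:ℤ) - r)) • pA N r a (j + k) := by
    rw [pA_step (by omega) hr, smul_smul, ← Polynomial.C_mul, mul_inv_cancel₀ ha,
      Polynomial.C_1, one_smul]
  have hsplit : (∑ k : Fin r, Polynomial.C (a ((k : ℤ) - r)) • pA N r a (j + k))
      = Polynomial.C (a (-(r:ℤ))) • pA N r a j
        + ∑ k ∈ Finset.Ico 1 r, Polynomial.C (a ((k:ℤ) - r)) • pA N r a (j + k) := by
    rw [fin_sum_split hr (fun k : ℕ => Polynomial.C (a ((k:ℤ) - r)) • pA N r a (j + k))]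
    norm_num
  rw [hsplit, key, Finset.sum_attach (Finset.Ico 1 r)
    (fun k => Polynomial.C (a ((k:ℤ) - r)) • pA N r a (j + k))]
  have : (Polynomial.C (a 0) - Polynomial.X) • pA N r a (j + r)
      = -((Polynomial.X - Polynomial.C (a 0)) • pA N r a (j + r)) := by
    rw [← neg_smul, neg_sub]
  rw [this]; abel

lemma pA_eval {N r : ℕ} {a : ℤ → ℂ} (hr : 1 ≤ r) (hN : r < N) (ha : a (-(r:ℤ)) ≠ 0)
    (z : ℂ) (UU : ℕ → ℂ)
    (hU : ∀ j : ℕ, j < N - r →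
      (∑ k : Fin r, a ((k : ℤ) - r) * UU (j + (k : ℕ))) + (a 0 - z) * UU (j + r) = 0) :
    ∀ j, j < N → UU j = ∑ k : Fin r, (pA N r a j k).eval z * UU (N - r + (k : ℕ)) := by
  suffices H : ∀ m (j : ℕ), j < N → N - j ≤ m →
      UU j = ∑ k : Fin r, (pA N r a j k).eval z * UU (N - r + (k : ℕ)) by
    intro j hj; exact H (N - j) j hj le_rfl
  intro m
  induction m with
  | zero => intro j hj h; omega
  | succ m ih =>
    intro j hj hm
    by_cases hbase : N - r ≤ j
    · rw [pA_base hbase]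
      have hlt : j - (N - r) < r := by omega
      rw [Finset.sum_eq_single (⟨j - (N - r), hlt⟩ : Fin r)]
      · simp only [Fin.val_mk]
        simp only [if_true, Polynomial.eval_one, one_mul]
        congr 1
        omega
      · intro b _ hb
        have : ¬ ((b : ℕ) = j - (N - r)) := fun hc => hb (Fin.ext hc)
        simp [this]
      · intro h; exact absurd (Finset.mem_univ _) h
    · have hjr : j < N - r := by omega
      set G : ℕ → ℂ := fun j' => ∑ k : Fin r, (pA N r a j' k).eval z * UU (N - r + (k : ℕ))
        with hG
      have key : Polynomial.C (a (-(r:ℤ))) • pA N r a j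
          = (Polynomial.X - Polynomial.C (a 0)) • pA N r a (j + r)
            - ∑ s ∈ (Finset.Ico 1 r).attach,
                Polynomial.C (a ((s:ℤ) - r)) • pA N r a (j + s) := by
        rw [pA_step (by omega) hr, smul_smul, ← Polynomial.C_mul, mul_inv_cancel₀ ha,
          Polynomial.C_1, one_smul]
      have keyx : ∀ x : Fin r, a (-(r:ℤ)) * (pA N r a j x).eval z
          = (z - a 0) * (pA N r a (j + r) x).eval z
            - ∑ s ∈ (Finset.Ico 1 r).attach,
                a ((s:ℤ) - r) * (pA N r a (j + s) x).eval z := by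
        intro x
        have h1 := congrArg (Polynomial.eval z) (congrFun key x)
        simpa [Polynomial.eval_finset_sum, smul_eq_mul, mul_comm, mul_assoc, mul_left_comm]
          using h1
      have hGstep : a (-(r:ℤ)) * G j
          = (z - a 0) * G (j + r) - ∑ s ∈ Finset.Ico 1 r, a ((s:ℤ) - r) * G (j + s) := by
        calc a (-(r:ℤ)) * G j
            = ∑ x : Fin r, (a (-(r:ℤ)) * (pA N r a j x).eval z) * UU (N - r + (x:ℕ)) := by
              rw [hG]; rw [Finset.mul_sum]; simp [mul_assoc]
          _ = ∑ x : Fin r, ((z - a 0) * (pA N r a (j + r) x).eval z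
                - ∑ s ∈ (Finset.Ico 1 r).attach,
                    a ((s:ℤ) - r) * (pA N r a (j + s) x).eval z) * UU (N - r + (x:ℕ)) := by
              refine Finset.sum_congr rfl fun x _ => ?_; rw [keyx x]
          _ = (∑ x : Fin r, ((z - a 0) * (pA N r a (j + r) x).eval z) * UU (N - r + (x:ℕ)))
                - ∑ x : Fin r, (∑ s ∈ (Finset.Ico 1 r).attach,
                    a ((s:ℤ) - r) * (pA N r a (j + s) x).eval z) * UU (N - r + (x:ℕ)) := by
              rw [← Finset.sum_sub_distrib]
              exact Finset.sum_congr rfl fun x _ => by ring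
          _ = (z - a 0) * G (j + r) - ∑ s ∈ Finset.Ico 1 r, a ((s:ℤ) - r) * G (j + s) := by
              congr 1
              · rw [hG, Finset.mul_sum]
                exact Finset.sum_congr rfl fun x _ => by ring
              · rw [← Finset.sum_attach (Finset.Ico 1 r)
                  (fun s => a ((s:ℤ) - r) * G (j + s))]
                have step : ∀ x : Fin r, (∑ s ∈ (Finset.Ico 1 r).attach,
                      a ((s:ℤ) - r) * (pA N r a (j + s) x).eval z) * UU (N - r + (x:ℕ))
                    = ∑ s ∈ (Finset.Ico 1 r).attach,
                      (a ((s:ℤ) - r) * (pA N r a (j + s) x).eval z) * UU (N - r + (x:ℕ)) :=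
                  fun x => Finset.sum_mul _ _ _
                rw [Finset.sum_congr rfl fun x _ => step x]
                rw [Finset.sum_comm]
                refine Finset.sum_congr rfl fun s _ => ?_
                rw [hG, Finset.mul_sum]
                refine Finset.sum_congr rfl fun x _ => ?_
                ring
      have hU' := hU j hjr
      rw [fin_sum_split hr (fun k : ℕ => a ((k:ℤ) - r) * UU (j + k))] at hU'
      have hsolve : a (-(r:ℤ)) * UU j
          = (z - a 0) * UU (j + r) - ∑ s ∈ Finset.Ico 1 r, a ((s:ℤ) - r) * UU (j + s) := by
        norm_num at hU'
        linear_combination hU'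
      have hIH : ∀ s : ℕ, 1 ≤ s → s ≤ r → G (j + s) = UU (j + s) := by
        intro s h1s hsr
        exact (ih (j + s) (by omega) (by omega)).symm
      rw [hIH r hr le_rfl] at hGstep
      have : ∑ s ∈ Finset.Ico 1 r, a ((s:ℤ) - r) * G (j + s)
          = ∑ s ∈ Finset.Ico 1 r, a ((s:ℤ) - r) * UU (j + s) := by
        refine Finset.sum_congr rfl fun s hs => ?_
        have := Finset.mem_Ico.mp hs
        rw [hIH s this.1 (by omega)]
      rw [this, ← hsolve] at hGstep
      exact (mul_left_cancel₀ ha hGstep).symm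

/-- entries of the recurrence rows -/
noncomputable def Rent (r : ℕ) (a : ℤ → ℂ) (i j : ℕ) : Polynomial ℂ :=
  if j = i + r then Polynomial.C (a 0) - Polynomial.X
  else if i ≤ j ∧ j < i + r then Polynomial.C (a ((j : ℤ) - i - r)) else 0

lemma RP0 {N r : ℕ} {a : ℤ → ℂ} (hr : 1 ≤ r) (ha : a (-(r:ℤ)) ≠ 0) {i : ℕ}
    (hi : i < N - r) (k : Fin r) :
    ∑ j ∈ Finset.range N, Rent r a i j * pA N r a j k = 0 := by
  have hsub : Finset.Icc i (i + r) ⊆ Finset.range N := by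
    intro x hx
    simp only [Finset.mem_Icc] at hx
    simp only [Finset.mem_range]
    omega
  rw [← Finset.sum_subset hsub (fun x hx hx2 => by
    have h1 : ¬ (x = i + r) := by
      intro hc; exact hx2 (by simp [Finset.mem_Icc]; omega)
    have h2 : ¬ (i ≤ x ∧ x < i + r) := by
      intro hc; exact hx2 (by simp [Finset.mem_Icc]; omega)
    simp [Rent, h1, h2])]
  rw [← Finset.Ico_add_one_right_eq_Icc, Finset.sum_Ico_eq_sum_range]
  have hcard : i + r + 1 - i = r + 1 := by omega
  rw [hcard, Finset.sum_range_succ]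
  have hlast : Rent r a i (i + r) = Polynomial.C (a 0) - Polynomial.X := by
    simp [Rent]
  have hmid : ∀ m, m < r → Rent r a i (i + m) = Polynomial.C (a ((m : ℤ) - r)) := by
    intro m hm
    have h1 : ¬ (i + m = i + r) := by omega
    have h2 : i ≤ i + m ∧ i + m < i + r := by omega
    simp only [Rent, if_neg h1, if_pos h2]
    congr 1
    congr 1
    push_cast
    ring
  have hmain := congrFun (pA_rec hr ha hi (j := i)) k
  simp only [Finset.sum_apply, Pi.add_apply, Pi.smul_apply, smul_eq_mul, Pi.zero_apply] at hmain
  rw [Fin.sum_univ_eq_sum_range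
    (fun k' : ℕ => Polynomial.C (a ((k' : ℤ) - r)) * pA N r a (i + k') k)] at hmain
  rw [← hmain]
  congr 1
  refine Finset.sum_congr rfl fun m hm => ?_
  rw [hmid m (Finset.mem_range.mp hm)]
  rw [hlast]

/-- split a sum over `Fin N` with `n + r = N` -/
lemma sum_fin_split {M : Type*} [AddCommMonoid M] {n r N : ℕ} (h : n + r = N) (f : Fin N → M) :
    ∑ j : Fin N, f j = (∑ j : Fin n, f ⟨(j : ℕ), by omega⟩)
      + ∑ k : Fin r, f ⟨n + (k : ℕ), by omega⟩ := by
  subst h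
  rw [Fin.sum_univ_add]
  rfl

/-- Degree/leading-coefficient lemma for determinants of matrices whose rows in `s`
have affine (degree ≤ 1) entries and whose other rows are constant. -/
lemma det_affine_rows {ι : Type*} [DecidableEq ι] [Fintype ι]
    (s : Finset ι) :
    ∀ M : Matrix ι ι (Polynomial ℂ),
    (∀ i ∉ s, ∀ j, (M i j).natDegree = 0) →
    (∀ i ∈ s, ∀ j, (M i j).natDegree ≤ 1) →
    M.det.natDegree ≤ s.card ∧
      M.det.coeff s.card
        = Matrix.det (Matrix.of fun i j =>
            if i ∈ s then (M i j).coeff 1 else (M i j).coeff 0) := by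
  induction s using Finset.induction_on with
  | empty =>
    intro M h1 h2
    have hM : M.det = Polynomial.C (Matrix.det (Matrix.of fun i j => (M i j).coeff 0)) := by
      rw [RingHom.map_det]
      congr 1
      refine Matrix.ext fun i j => ?_
      simp only [RingHom.mapMatrix_apply, Matrix.map_apply, Matrix.of_apply]
      exact Polynomial.eq_C_of_natDegree_eq_zero (h1 i (by simp) j)
    refine ⟨by simp [hM], ?_⟩
    simp only [hM, Finset.card_empty, Polynomial.coeff_C_zero, Finset.notMem_empty, if_false]
  | @insert i s his ih =>
    intro M h1 h2
    have hrow : M i = (fun j => Polynomial.X * Polynomial.C ((M i j).coeff 1))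
        + fun j => Polynomial.C ((M i j).coeff 0) := by
      funext j
      have := Polynomial.eq_X_add_C_of_natDegree_le_one (h2 i (Finset.mem_insert_self i s) j)
      rw [Pi.add_apply]
      rw [mul_comm]
      exact this
    have hXrow : (fun j => Polynomial.X * Polynomial.C ((M i j).coeff 1))
        = (Polynomial.X : Polynomial ℂ) • fun j => Polynomial.C ((M i j).coeff 1) := by
      funext j; simp [smul_eq_mul]
    set M1 := M.updateRow i fun j => Polynomial.C ((M i j).coeff 1) with hM1
    set M0 := M.updateRow i fun j => Polynomial.C ((M i j).coeff 0) with hM0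
    have hdet : M.det = Polynomial.X * M1.det + M0.det := by
      conv_lhs => rw [← Matrix.updateRow_eq_self M i, hrow, Matrix.det_updateRow_add,
        hXrow, Matrix.det_updateRow_smul]
    have hA1 : ∀ i' ∉ s, ∀ j, (M1 i' j).natDegree = 0 := by
      intro i' hi' j
      by_cases h : i' = i
      · subst h; simp [hM1]
      · rw [hM1, Matrix.updateRow_ne h]
        exact h1 i' (by simp [h, hi']) j
    have hA2 : ∀ i' ∈ s, ∀ j, (M1 i' j).natDegree ≤ 1 := by
      intro i' hi' j
      have h : i' ≠ i := fun hc => his (hc ▸ hi')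
      rw [hM1, Matrix.updateRow_ne h]
      exact h2 i' (Finset.mem_insert_of_mem hi') j
    have hB1 : ∀ i' ∉ s, ∀ j, (M0 i' j).natDegree = 0 := by
      intro i' hi' j
      by_cases h : i' = i
      · subst h; simp [hM0]
      · rw [hM0, Matrix.updateRow_ne h]
        exact h1 i' (by simp [h, hi']) j
    have hB2 : ∀ i' ∈ s, ∀ j, (M0 i' j).natDegree ≤ 1 := by
      intro i' hi' j
      have h : i' ≠ i := fun hc => his (hc ▸ hi')
      rw [hM0, Matrix.updateRow_ne h]
      exact h2 i' (Finset.mem_insert_of_mem hi') j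
    obtain ⟨ih1d, ih1c⟩ := ih M1 hA1 hA2
    obtain ⟨ih0d, ih0c⟩ := ih M0 hB1 hB2
    have hcard : (insert i s).card = s.card + 1 := Finset.card_insert_of_notMem his
    constructor
    · rw [hdet, hcard]
      refine le_trans (Polynomial.natDegree_add_le _ _) ?_
      refine max_le ?_ (by omega)
      refine le_trans (Polynomial.natDegree_mul_le) ?_
      simp only [Polynomial.natDegree_X]
      omega
    · rw [hdet, hcard]
      rw [Polynomial.coeff_add]
      rw [Polynomial.coeff_X_mul]
      rw [Polynomial.coeff_eq_zero_of_natDegree_lt (lt_of_le_of_lt ih0d (by omega)), add_zero]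
      rw [ih1c]
      congr 1
      ext i' j
      simp only [Matrix.of_apply]
      by_cases h : i' = i
      · subst h
        rw [if_neg his, if_pos (Finset.mem_insert_self i' s), hM1, Matrix.updateRow_self]
        simp
      · rw [hM1, Matrix.updateRow_ne h]
        by_cases h2' : i' ∈ s
        · rw [if_pos h2', if_pos (Finset.mem_insert_of_mem h2')]
        · rw [if_neg h2', if_neg (by simp [h, h2'])]
/-- Reduction lemma: if the leading `r×r` block of `B` is invertible, there exists an
`r×r` matrix `C(z)` with polynomial entries such that `B U = (0 | C(z)) U` for every
`U ∈ ℂ^N` satisfying the recurrence, and `det C(z)` has degree `N - r` in `z`. -/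
theorem reduction_lemma (N r : ℕ) (hr : 1 ≤ r) (hN : r < N)
    (a : ℤ → ℂ) (ha : a (-(r:ℤ)) ≠ 0) (ha0 : ‖a 0‖ < 1)
    (B : Matrix (Fin r) (Fin N) ℂ)
    (hB : IsUnit (Matrix.det (Matrix.of fun i j : Fin r => B i (Fin.castLE (by omega) j)))) :
    ∃ C : Matrix (Fin r) (Fin r) (Polynomial ℂ),
      C.det.natDegree = N - r ∧
      ∀ z : ℂ, 1 ≤ ‖z‖ →
        ∀ U : Fin N → ℂ,
          (∀ j : ℕ, (hj : j < N - r) →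
            (∑ k : Fin r, a ((k : ℤ) - r) * U ⟨j + (k : ℕ), by omega⟩)
              + (a 0 - z) * U ⟨j + r, by omega⟩ = 0) →
          B.mulVec U = (Matrix.of fun (i : Fin r) (j : Fin N) =>
            if h : (j : ℕ) < N - r then 0
            else (C i ⟨(j : ℕ) - (N - r), by omega⟩).eval z).mulVec U := by
  have h1 : (N - r) + r = N := by omega
  set T : Matrix (Fin (N-r)) (Fin (N-r)) (Polynomial ℂ) :=
    Matrix.of fun i j => Rent r a i j with hT
  set A' : Matrix (Fin (N-r)) (Fin r) (Polynomial ℂ) :=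
    Matrix.of fun i k => Rent r a i ((N-r) + k) with hA'
  set B₁ : Matrix (Fin r) (Fin (N-r)) (Polynomial ℂ) :=
    Matrix.of fun s j => Polynomial.C (B s ⟨(j:ℕ), by omega⟩) with hB₁
  set B₂ : Matrix (Fin r) (Fin r) (Polynomial ℂ) :=
    Matrix.of fun s k => Polynomial.C (B s ⟨(N-r) + (k:ℕ), by omega⟩) with hB₂
  set Q : Matrix (Fin (N-r)) (Fin r) (Polynomial ℂ) :=
    Matrix.of fun j k => pA N r a (j:ℕ) k with hQ
  refine ⟨B₁ * Q + B₂, ?_, ?_⟩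
  · -- degree part
    have hRc1 : ∀ i j : ℕ, (Rent r a i j).coeff 1 = if j = i + r then -1 else 0 := by
      intro i j
      unfold Rent
      split_ifs with hc1 hc2
      · simp
      · simp [Polynomial.coeff_C]
      · simp
    have hRentDeg : ∀ i j : ℕ, (Rent r a i j).natDegree ≤ 1 := by
      intro i j
      unfold Rent
      split_ifs with hc1 hc2
      · rw [show Polynomial.C (a 0) - Polynomial.X = -(Polynomial.X - Polynomial.C (a 0)) from
          (neg_sub _ _).symm, Polynomial.natDegree_neg, Polynomial.natDegree_X_sub_C]
      · simp
      · simp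
    have hTQ : T * Q + A' = 0 := by
      refine Matrix.ext fun i k => ?_
      have h0 := RP0 (N := N) hr ha (i := (i:ℕ)) (by omega) k
      rw [← Fin.sum_univ_eq_sum_range (fun j => Rent r a (i:ℕ) j * pA N r a j k) N] at h0
      rw [sum_fin_split h1 (fun j : Fin N => Rent r a (i:ℕ) (j:ℕ) * pA N r a (j:ℕ) k)] at h0
      simp only [Fin.val_mk] at h0
      have hsec : ∑ k' : Fin r, Rent r a (i:ℕ) ((N-r) + (k':ℕ)) * pA N r a ((N-r) + (k':ℕ)) k
          = A' i k := by
        rw [Finset.sum_eq_single k]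
        · rw [pA_base (by omega)]
          simp only []
          rw [if_pos (by omega), mul_one]
          simp [hA']
        · intro b _ hb
          rw [pA_base (by omega)]
          simp only []
          rw [if_neg (fun hc => hb (Fin.ext (by omega))), mul_zero]
        · intro h; exact absurd (Finset.mem_univ _) h
      rw [hsec] at h0
      simpa [hT, hQ, Matrix.mul_apply] using h0
    have hW : (Matrix.fromBlocks (1 : Matrix (Fin (N-r)) (Fin (N-r)) (Polynomial ℂ)) Q 0
        (1 : Matrix (Fin r) (Fin r) (Polynomial ℂ))).det = 1 := by
      rw [Matrix.det_fromBlocks_zero₂₁, Matrix.det_one, Matrix.det_one, one_mul]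
    have hMW : Matrix.fromBlocks T A' B₁ B₂ * Matrix.fromBlocks 1 Q 0 1
        = Matrix.fromBlocks T 0 B₁ (B₁ * Q + B₂) := by
      rw [Matrix.fromBlocks_multiply]
      simp only [Matrix.mul_one, Matrix.mul_zero, add_zero]
      rw [hTQ]
    have hdet1 : (Matrix.fromBlocks T A' B₁ B₂).det = T.det * (B₁ * Q + B₂).det := by
      have h2 := Matrix.det_mul (Matrix.fromBlocks T A' B₁ B₂) (Matrix.fromBlocks 1 Q 0 1)
      rw [hMW, hW, mul_one, Matrix.det_fromBlocks_zero₁₂] at h2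
      exact h2.symm
    have hdetT : T.det = Polynomial.C ((a (-(r:ℤ)))^(N-r)) := by
      have htri : T.BlockTriangular id := by
        intro i j hij
        have hji : (j:ℕ) < (i:ℕ) := hij
        simp only [hT, Matrix.of_apply, Rent]
        rw [if_neg (by omega), if_neg (by omega)]
      rw [Matrix.det_of_upperTriangular htri]
      have hdiag : ∀ i : Fin (N-r), T i i = Polynomial.C (a (-(r:ℤ))) := by
        intro i
        simp only [hT, Matrix.of_apply, Rent]
        rw [if_neg (by omega), if_pos (by omega)]
        congr 1
        push_cast
        ring
      rw [Finset.prod_congr rfl fun i _ => hdiag i, Finset.prod_const, Finset.card_univ,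
        Fintype.card_fin, ← map_pow]
    set s : Finset (Fin (N-r) ⊕ Fin r) := Finset.univ.map ⟨Sum.inl, Sum.inl_injective⟩ with hs
    have hcard : s.card = N - r := by
      rw [hs, Finset.card_map, Finset.card_univ, Fintype.card_fin]
    have hmemL : ∀ t : Fin (N-r), (Sum.inl t : Fin (N-r) ⊕ Fin r) ∈ s := by
      intro t; simp [hs]
    have hmemR : ∀ k : Fin r, (Sum.inr k : Fin (N-r) ⊕ Fin r) ∉ s := by
      intro k; simp [hs]
    obtain ⟨hdeg, hcoeff⟩ := det_affine_rows s (Matrix.fromBlocks T A' B₁ B₂)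
      (by
        intro p hp j
        cases p with
        | inl t => exact absurd (hmemL t) hp
        | inr s' =>
          cases j with
          | inl jj => simp [hB₁]
          | inr k => simp [hB₂])
      (by
        intro p hp j
        cases p with
        | inl t =>
          cases j with
          | inl jj => simpa [hT] using hRentDeg t jj
          | inr k => simpa [hA'] using hRentDeg t ((N-r)+k)
        | inr s' => exact absurd hp (hmemR s'))
    rw [hcard] at hdeg hcoeff
    set NN := Matrix.of fun p q =>
      if p ∈ s then ((Matrix.fromBlocks T A' B₁ B₂) p q).coeff 1
      else ((Matrix.fromBlocks T A' B₁ B₂) p q).coeff 0 with hNNdef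
    have h2' : r + (N - r) = N := by omega
    set e : Fin (N - r) ⊕ Fin r ≃ Fin N := finSumFinEquiv.trans (finCongr h1) with he
    set e' : Fin r ⊕ Fin (N - r) ≃ Fin N := finSumFinEquiv.trans (finCongr h2') with he'
    have heL : ∀ j : Fin (N-r), ((e (Sum.inl j)) : ℕ) = (j:ℕ) := by
      intro j; simp [he]
    have heR : ∀ k : Fin r, ((e (Sum.inr k)) : ℕ) = (N - r) + (k:ℕ) := by
      intro k; simp [he]
    have he'L : ∀ s0 : Fin r, ((e' (Sum.inl s0)) : ℕ) = (s0:ℕ) := by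
      intro s0; simp [he']
    have he'R : ∀ t : Fin (N-r), ((e' (Sum.inr t)) : ℕ) = r + (t:ℕ) := by
      intro t; simp [he']
    have hNNtop : ∀ (t : Fin (N-r)) (c : Fin (N-r) ⊕ Fin r),
        NN (Sum.inl t) c = if ((e c : ℕ)) = (t:ℕ) + r then -1 else 0 := by
      intro t c
      rw [hNNdef]
      simp only [Matrix.of_apply, if_pos (hmemL t)]
      cases c with
      | inl j =>
        simp only [Matrix.fromBlocks_apply₁₁, hT, Matrix.of_apply]
        rw [hRc1, heL]
      | inr k =>
        simp only [Matrix.fromBlocks_apply₁₂, hA', Matrix.of_apply]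
        rw [hRc1, heR]
    have hNNbot : ∀ (s0 : Fin r) (c : Fin (N-r) ⊕ Fin r),
        NN (Sum.inr s0) c = B s0 (e c) := by
      intro s0 c
      rw [hNNdef]
      simp only [Matrix.of_apply, if_neg (hmemR s0)]
      cases c with
      | inl j =>
        simp only [Matrix.fromBlocks_apply₂₁, hB₁, Matrix.of_apply, Polynomial.coeff_C_zero]
        exact congrArg (B s0) (Fin.ext (heL j).symm)
      | inr k =>
        simp only [Matrix.fromBlocks_apply₂₂, hB₂, Matrix.of_apply, Polynomial.coeff_C_zero]
        exact congrArg (B s0) (Fin.ext (heR k).symm)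
    set ρ : (Fin r ⊕ Fin (N-r)) ≃ (Fin (N-r) ⊕ Fin r) := Equiv.sumComm _ _ with hρ
    set κ : (Fin r ⊕ Fin (N-r)) ≃ (Fin (N-r) ⊕ Fin r) := e'.trans e.symm with hκ
    have hκe : ∀ q, e (κ q) = e' q := by
      intro q; rw [hκ]; simp
    have hsub : NN.submatrix ρ κ = Matrix.fromBlocks
        (Matrix.of fun i j : Fin r => B i (Fin.castLE (by omega) j))
        (Matrix.of fun (s0 : Fin r) (t : Fin (N-r)) => B s0 (e' (Sum.inr t)))
        0 (-1) := by
      refine Matrix.ext fun p q => ?_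
      cases p with
      | inl s0 =>
        cases q with
        | inl s1 =>
          simp only [Matrix.submatrix_apply, hρ, Equiv.sumComm_apply, Sum.swap_inl,
            Matrix.fromBlocks_apply₁₁, Matrix.of_apply]
          rw [hNNbot, hκe]
          exact congrArg (B s0) (Fin.ext (he'L s1))
        | inr t =>
          simp only [Matrix.submatrix_apply, hρ, Equiv.sumComm_apply, Sum.swap_inl,
            Matrix.fromBlocks_apply₁₂, Matrix.of_apply]
          rw [hNNbot, hκe]
      | inr t =>
        cases q with
        | inl s1 =>
          simp only [Matrix.submatrix_apply, hρ, Equiv.sumComm_apply, Sum.swap_inr,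
            Matrix.fromBlocks_apply₂₁, Matrix.zero_apply]
          rw [hNNtop, hκe]
          rw [if_neg (by rw [he'L]; omega)]
        | inr t' =>
          simp only [Matrix.submatrix_apply, hρ, Equiv.sumComm_apply, Sum.swap_inr,
            Matrix.fromBlocks_apply₂₂]
          rw [hNNtop, hκe]
          by_cases hc : t' = t
          · subst hc
            rw [if_pos (by rw [he'R]; omega)]
            simp [Matrix.one_apply]
          · rw [if_neg (by
              rw [he'R]
              intro hcon
              exact hc (Fin.ext (by omega)))]
            have : (t : Fin (N-r)) ≠ t' := fun hcc => hc (hcc.symm)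
            simp [Matrix.one_apply, this]
    have hdetPm : (NN.submatrix ρ κ).det ≠ 0 := by
      rw [hsub, Matrix.det_fromBlocks_zero₂₁]
      refine mul_ne_zero ?_ ?_
      · exact hB.ne_zero
      · have hneg : (-1 : Matrix (Fin (N-r)) (Fin (N-r)) ℂ) = (-1 : ℂ) • 1 := by
          simp
        rw [hneg, Matrix.det_smul, Matrix.det_one, mul_one]
        exact pow_ne_zero _ (by norm_num)
    have hcomp : (NN.submatrix ρ ρ).submatrix id ⇑(κ.trans ρ.symm) = NN.submatrix ρ κ := by
      refine Matrix.ext fun p q => ?_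
      simp [Matrix.submatrix_apply]
    have hperm := Matrix.det_permute' (κ.trans ρ.symm) (NN.submatrix ρ ρ)
    rw [hcomp, Matrix.det_submatrix_equiv_self] at hperm
    have hNNdet : NN.det ≠ 0 := by
      intro h0
      rw [h0, mul_zero] at hperm
      exact hdetPm hperm
    have hdegMeq : (Matrix.fromBlocks T A' B₁ B₂).det.natDegree = N - r := by
      refine le_antisymm hdeg ?_
      refine Polynomial.le_natDegree_of_ne_zero ?_
      rw [hcoeff]
      exact hNNdet
    rw [hdet1, hdetT, Polynomial.natDegree_C_mul (pow_ne_zero _ ha)] at hdegMeq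
    exact hdegMeq
  · -- mulVec part
    have CC_full : ∀ (s k : Fin r), (B₁ * Q + B₂) s k
        = ∑ j : Fin N, Polynomial.C (B s j) * pA N r a (j:ℕ) k := by
      intro s k
      rw [sum_fin_split h1 (fun j : Fin N => Polynomial.C (B s j) * pA N r a (j:ℕ) k)]
      simp only [Matrix.add_apply, Matrix.mul_apply, hB₁, hB₂, hQ, Matrix.of_apply]
      congr 1
      rw [Finset.sum_eq_single k]
      · rw [pA_base (by omega)]
        simp only [Fin.val_mk]
        rw [if_pos (by omega), mul_one]
      · intro b _ hb
        rw [pA_base (by omega)]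
        simp only [Fin.val_mk]
        rw [if_neg (by
          intro hc
          exact hb (Fin.ext (by omega)))]
        rw [mul_zero]
      · intro h; exact absurd (Finset.mem_univ _) h
    intro z hz U hU
    set UU : ℕ → ℂ := fun t => if h : t < N then U ⟨t, h⟩ else 0 with hUU
    have hUcoe : ∀ (j : Fin N), U j = UU (j : ℕ) := by
      intro j; rw [hUU]; simp only []; rw [dif_pos j.2]
    have hU' : ∀ j : ℕ, j < N - r →
        (∑ k : Fin r, a ((k:ℤ) - r) * UU (j + (k:ℕ))) + (a 0 - z) * UU (j + r) = 0 := by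
      intro j hj
      have hcongr : ∀ k : Fin r, a ((k:ℤ) - r) * UU (j + (k:ℕ))
          = a ((k:ℤ) - r) * U ⟨j + (k:ℕ), by omega⟩ := by
        intro k; rw [hUU]; simp only []; rw [dif_pos (by omega)]
      rw [Finset.sum_congr rfl fun k _ => hcongr k]
      have : UU (j + r) = U ⟨j + r, by omega⟩ := by
        rw [hUU]; simp only []; rw [dif_pos (by omega)]
      rw [this]
      exact hU j hj
    have hEval := pA_eval hr hN ha z UU hU'
    funext i
    simp only [Matrix.mulVec, dotProduct]
    have key : ∀ j : Fin N, U j = ∑ k : Fin r, (pA N r a (j:ℕ) k).eval z * UU (N - r + (k:ℕ)) := by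
      intro j; rw [hUcoe j]; exact hEval j j.2
    calc ∑ j : Fin N, B i j * U j
        = ∑ j : Fin N, ∑ k : Fin r,
            B i j * ((pA N r a (j:ℕ) k).eval z * UU (N - r + (k:ℕ))) := by
          refine Finset.sum_congr rfl fun j _ => ?_
          rw [key j, Finset.mul_sum]
      _ = ∑ k : Fin r, (∑ j : Fin N, B i j * (pA N r a (j:ℕ) k).eval z) * UU (N - r + (k:ℕ)) := by
          rw [Finset.sum_comm]
          refine Finset.sum_congr rfl fun k _ => ?_
          rw [Finset.sum_mul]
          refine Finset.sum_congr rfl fun j _ => ?_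
          ring
      _ = ∑ k : Fin r, ((B₁ * Q + B₂) i k).eval z * UU (N - r + (k:ℕ)) := by
          refine Finset.sum_congr rfl fun k _ => ?_
          rw [CC_full i k]
          rw [Polynomial.eval_finset_sum]
          congr 1
          refine Finset.sum_congr rfl fun j _ => ?_
          rw [Polynomial.eval_mul, Polynomial.eval_C]
      _ = ∑ j : Fin N, (Matrix.of fun (i : Fin r) (j : Fin N) =>
            if h : (j : ℕ) < N - r then 0
            else ((B₁ * Q + B₂) i ⟨(j : ℕ) - (N - r), by omega⟩).eval z) i j * U j := by
          rw [sum_fin_split h1 (fun j : Fin N => (Matrix.of fun (i : Fin r) (j : Fin N) =>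
            if h : (j : ℕ) < N - r then 0
            else ((B₁ * Q + B₂) i ⟨(j : ℕ) - (N - r), by omega⟩).eval z) i j * U j)]
          have hz1 : ∀ j : Fin (N - r), (Matrix.of fun (i : Fin r) (j : Fin N) =>
              if h : (j : ℕ) < N - r then 0
              else ((B₁ * Q + B₂) i ⟨(j : ℕ) - (N - r), by omega⟩).eval z) i
                ⟨(j:ℕ), by omega⟩ * U ⟨(j:ℕ), by omega⟩ = 0 := by
            intro j
            rw [Matrix.of_apply, dif_pos (by simpa using j.2), zero_mul]
          rw [Finset.sum_congr rfl fun j _ => hz1 j, Finset.sum_const_zero, zero_add]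
          refine Finset.sum_congr rfl fun k _ => ?_
          rw [Matrix.of_apply, dif_neg (by simp only [Fin.val_mk]; omega)]
          have hidx : (⟨(N - r) + (k:ℕ) - (N - r), by omega⟩ : Fin r) = k := by
            apply Fin.ext; simp
          rw [hidx]
          have : UU ((N - r) + (k:ℕ)) = U ⟨(N - r) + (k:ℕ), by omega⟩ := by
            rw [hUU]; simp only []; rw [dif_pos (by omega)]
          rw [this]
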